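/- For the Bethe ansatz two-particle solution u(x_1,x_2) = A_{12} ξ_1^{x_1} ξ_2^{x_2} + A_{21} ξ_1^{x_2} ξ_2^{x_1}, the AZRP boundary condition u(x,x) = p·u(x,x-1) + q·u(x+1,x) holds for all x ∈ ℤ if and only if A_{21}/A_{12} = -(ξ_1/ξ_2)·(p + qξ_1ξ_2 - ξ_2)/(p + qξ_1ξ_2 - ξ_1), assuming A_{12} ≠ 0, ξ_1, ξ_2 ≠ 0 and p + qξ_1ξ_2 - ξ_1 ≠ 0. -/

import Mathlib

/-- For the Bethe ansatz two-particle solution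
u(x₁,x₂) = A₁₂ ξ₁^{x₁} ξ₂^{x₂} + A₂₁ ξ₁^{x₂} ξ₂^{x₁}, the AZRP boundary condition
u(x,x) = p u(x,x-1) + q u(x+1,x) holds for all x ∈ ℤ iff
A₂₁/A₁₂ = -(ξ₁/ξ₂)·(p + qξ₁ξ₂ - ξ₂)/(p + qξ₁ξ₂ - ξ₁). -/
theorem azrp_smatrix {K : Type*} [Field K] (p q A12 A21 ξ1 ξ2 : K)
    (hA : A12 ≠ 0) (h1 : ξ1 ≠ 0) (h2 : ξ2 ≠ 0)
    (hden : p + q * ξ1 * ξ2 - ξ1 ≠ 0)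
    (u : ℤ → ℤ → K)
    (hu : ∀ x1 x2 : ℤ, u x1 x2 = A12 * ξ1 ^ x1 * ξ2 ^ x2 + A21 * ξ1 ^ x2 * ξ2 ^ x1) :
    (∀ x : ℤ, u x x = p * u x (x - 1) + q * u (x + 1) x) ↔
    A21 / A12 = -(ξ1 / ξ2) * ((p + q * ξ1 * ξ2 - ξ2) / (p + q * ξ1 * ξ2 - ξ1)) := by
  have key : ∀ x : ℤ,
      (u x x = p * u x (x - 1) + q * u (x + 1) x) ↔
      (A21 * ξ2 * (p + q * ξ1 * ξ2 - ξ1) + A12 * ξ1 * (p + q * ξ1 * ξ2 - ξ2) = 0) := by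
    intro x
    rw [hu, hu, hu]
    have e1 : ξ1 ^ (x - 1) = ξ1 ^ x / ξ1 := by
      rw [zpow_sub_one₀ h1]; rw [div_eq_mul_inv]
    have e2 : ξ2 ^ (x - 1) = ξ2 ^ x / ξ2 := by
      rw [zpow_sub_one₀ h2]; rw [div_eq_mul_inv]
    have e3 : ξ1 ^ (x + 1) = ξ1 ^ x * ξ1 := zpow_add_one₀ h1 x
    have e4 : ξ2 ^ (x + 1) = ξ2 ^ x * ξ2 := zpow_add_one₀ h2 x
    have hp1 : ξ1 ^ x ≠ 0 := zpow_ne_zero x h1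
    have hp2 : ξ2 ^ x ≠ 0 := zpow_ne_zero x h2
    rw [e1, e2, e3, e4]
    constructor
    · intro h
      have h' := sub_eq_zero.mpr h
      field_simp at h'
      have hfac : ξ1 ^ x * ξ2 ^ x *
          (A21 * ξ2 * (p + q * ξ1 * ξ2 - ξ1) + A12 * ξ1 * (p + q * ξ1 * ξ2 - ξ2)) = 0 := by
        linear_combination -h'
      rcases mul_eq_zero.mp hfac with h0 | h0
      · exact absurd h0 (mul_ne_zero hp1 hp2)
      · exact h0
    · intro h
      have : A12 * ξ1 ^ x * ξ2 ^ x + A21 * ξ1 ^ x * ξ2 ^ x -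
          (p * (A12 * ξ1 ^ x * (ξ2 ^ x / ξ2) + A21 * (ξ1 ^ x / ξ1) * ξ2 ^ x) +
           q * (A12 * (ξ1 ^ x * ξ1) * ξ2 ^ x + A21 * ξ1 ^ x * (ξ2 ^ x * ξ2))) = 0 := by
        field_simp
        linear_combination (-(ξ1 ^ x) * ξ2 ^ x) * h
      exact sub_eq_zero.mp this
  rw [forall_congr' key, forall_const]
  rw [div_eq_iff hA]
  constructor
  · intro hE
    have hden' : p + ξ1 * ξ2 * q - ξ1 ≠ 0 := by convert hden using 2; ring
    field_simp
    linear_combination hE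
  · intro hR
    have hden' : p + ξ1 * ξ2 * q - ξ1 ≠ 0 := by convert hden using 2; ring
    field_simp at hR
    linear_combination hR
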